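/- Let n, m, ℓ be natural numbers and Cor ⊆ {1,…,n} with |Cor| < n. Fix arbitrary functions h_j : {0,1}^m → {0,1}^ℓ for j = 1,…,n, fixed values a_j ∈ {0,1}^ℓ × {0,1}^m for each j ∈ Cor, fixed tags t_j ∈ {0,1}^ℓ for each j ∉ Cor, a fixed ciphertext V₃ ∈ {0,1}^m, and a message μ ∈ {0,1}^m. Then the number of pairs (r, R) ∈ ({0,1}^ℓ)^n × ({0,1}^m)^n satisfying simultaneously (i) (r_j, R_j) = a_j for all j ∈ Cor, (ii) r_j ⊕ h_j(R_j) = t_j for all j ∉ Cor, and (iii) μ ⊕ (⊕_{j∉Cor} R_j) = V₃, is exactly 2^(m·(n − |Cor| − 1)). In particular this count does not depend on μ. (This is the counting computation in the privacy proof of Theorem 4: the number of sender coin tosses consistent with a fixed adversary view is 2^(m(n−|Cor|−1)), independently of the transmitted message.) -/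

import Mathlib

instance : Std.Commutative (α := Bool) xor := ⟨Bool.xor_comm⟩
instance : Std.Associative (α := Bool) xor := ⟨Bool.xor_assoc⟩

/-- Bitwise XOR of the bitstrings `R j` over `j ∈ s`. -/
def bigXor {n m : ℕ} (s : Finset (Fin n)) (R : Fin n → (Fin m → Bool)) :
    Fin m → Bool :=
  fun k => s.fold xor false (fun j => R j k)

/-- Extend a function defined on `S` to all of `Fin n` by `false` outside. -/
noncomputable def baseR {n m : ℕ} (S : Finset (Fin n))
    (R' : {j : Fin n // j ∈ S} → (Fin m → Bool)) : Fin n → (Fin m → Bool) :=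
  fun j => if hj : j ∈ S then R' ⟨j, hj⟩ else fun _ => false

lemma bigXor_congr {n m : ℕ} {S : Finset (Fin n)}
    {R R' : Fin n → (Fin m → Bool)} (hRR' : ∀ j ∈ S, R j = R' j) (k : Fin m) :
    bigXor S R k = bigXor S R' k :=
  Finset.fold_congr (fun j hj => by rw [hRR' j hj])

open Classical in
/-- counting computation in the privacy proof of Theorem 4.
The number of sender coin tosses `(r, R)` consistent with a fixed adversary view
(given pairs on corrupted wires, tags on uncorrupted wires, and ciphertext `V₃`)
is exactly `2^(m·(n − |Cor| − 1))`, independently of the message `μ`. -/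
theorem count_consistent_coins_eq
    {n m ℓ : ℕ} (Cor : Finset (Fin n)) (hCor : Cor.card < n)
    (h : Fin n → (Fin m → Bool) → (Fin ℓ → Bool))
    (a : {j : Fin n // j ∈ Cor} → (Fin ℓ → Bool) × (Fin m → Bool))
    (t : {j : Fin n // j ∉ Cor} → (Fin ℓ → Bool))
    (V₃ μ : Fin m → Bool) :
    (Finset.univ.filter
        (fun rR : (Fin n → (Fin ℓ → Bool)) × (Fin n → (Fin m → Bool)) =>
          (∀ j (hj : j ∈ Cor), (rR.1 j, rR.2 j) = a ⟨j, hj⟩) ∧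
          (∀ j (hj : j ∉ Cor),
            (fun k => xor (rR.1 j k) (h j (rR.2 j) k)) = t ⟨j, hj⟩) ∧
          (fun k => xor (μ k) (bigXor Corᶜ rR.2 k)) = V₃)).card =
      2 ^ (m * (n - Cor.card - 1)) := by
  classical
  have hne : Corᶜ.Nonempty := by
    rw [← Finset.card_pos, Finset.card_compl, Fintype.card_fin]
    omega
  obtain ⟨j₀, hj₀⟩ := hne
  set S : Finset (Fin n) := Corᶜ.erase j₀ with hS
  have hj₀S : j₀ ∉ S := Finset.notMem_erase _ _
  have hins : insert j₀ S = Corᶜ := Finset.insert_erase hj₀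
  have hSsub : ∀ j ∈ S, j ∉ Cor := by
    intro j hj
    exact Finset.mem_compl.mp (Finset.mem_of_mem_erase hj)
  have hSne : ∀ j ∈ S, j ≠ j₀ := fun j hj => Finset.ne_of_mem_erase hj
  have hj₀Cor : j₀ ∉ Cor := Finset.mem_compl.mp hj₀
  have hScard : S.card = n - Cor.card - 1 := by
    rw [hS, Finset.card_erase_of_mem hj₀, Finset.card_compl, Fintype.card_fin]
  have hsplit : ∀ (R : Fin n → Fin m → Bool) (k : Fin m),
      bigXor Corᶜ R k = xor (R j₀ k) (bigXor S R k) := by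
    intro R k
    show (Corᶜ).fold xor false (fun j => R j k) = _
    rw [← hins, Finset.fold_insert hj₀S]
    rfl
  -- the inverse map: reconstruct the coins from the free choices on S
  set FR : ({j : Fin n // j ∈ S} → (Fin m → Bool)) → (Fin n → (Fin m → Bool)) :=
    fun R' j =>
      if hj : j ∈ Cor then (a ⟨j, hj⟩).2
      else if j = j₀ then
        fun k => xor (μ k) (xor (V₃ k) (bigXor S (baseR S R') k))
      else baseR S R' j with hFR
  set F : ({j : Fin n // j ∈ S} → (Fin m → Bool)) →
      (Fin n → (Fin ℓ → Bool)) × (Fin n → (Fin m → Bool)) :=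
    fun R' =>
      (fun j =>
        if hj : j ∈ Cor then (a ⟨j, hj⟩).1
        else fun k => xor (t ⟨j, hj⟩ k) (h j (FR R' j) k),
       FR R') with hF
  have hFRS : ∀ R' j (hj : j ∈ S), FR R' j = R' ⟨j, hj⟩ := by
    intro R' j hj
    simp only [hFR, dif_neg (hSsub j hj), if_neg (hSne j hj), baseR, dif_pos hj]
  have hbase : ∀ R' (k : Fin m),
      bigXor S (FR R') k = bigXor S (baseR S R') k := by
    intro R' k
    refine bigXor_congr (fun j hj => ?_) k
    rw [hFRS R' j hj]
    simp [baseR, dif_pos hj]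
  rw [Finset.card_nbij' (fun rR => fun j : {j : Fin n // j ∈ S} => rR.2 j.1) F
      (t := Finset.univ)]
  · rw [Finset.card_univ, Fintype.card_fun, Fintype.card_fun, Fintype.card_coe,
      Fintype.card_bool, Fintype.card_fin, hScard, pow_mul]
  · intro _ _
    exact Finset.mem_univ _
  · -- F R' satisfies the constraints
    intro R' _
    simp only [Finset.mem_coe, Finset.mem_filter, Finset.mem_univ, true_and]
    refine ⟨?_, ?_, ?_⟩
    · intro j hj
      simp [hF, hFR, dif_pos hj]
    · intro j hj
      funext k
      simp only [hF, dif_neg hj]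
      cases t ⟨j, hj⟩ k <;> cases h j (FR R' j) k <;> rfl
    · funext k
      rw [hsplit, hbase]
      have hj₀val : FR R' j₀ k = xor (μ k) (xor (V₃ k) (bigXor S (baseR S R') k)) := by
        simp [hFR, dif_neg hj₀Cor]
      rw [show (F R').2 = FR R' from rfl, hj₀val]
      cases μ k <;> cases V₃ k <;> cases bigXor S (baseR S R') k <;> rfl
  · -- left inverse: F (restriction of rR) = rR
    intro rR hrR
    simp only [Finset.mem_coe, Finset.mem_filter, Finset.mem_univ, true_and] at hrR
    obtain ⟨h1, h2, h3⟩ := hrR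
    set R' : {j : Fin n // j ∈ S} → (Fin m → Bool) := fun j => rR.2 j.1 with hR'
    have hRpart : FR R' = rR.2 := by
      funext j
      by_cases hj : j ∈ Cor
      · have := h1 j hj
        simp only [hFR, dif_pos hj]
        exact (congrArg Prod.snd this).symm
      · by_cases hj0 : j = j₀
        · subst hj0
          simp only [hFR, dif_neg hj, if_pos rfl, if_true]
          funext k
          have hXeq : bigXor S (baseR S R') k = bigXor S rR.2 k := by
            refine bigXor_congr (fun i hi => ?_) k
            simp [baseR, dif_pos hi, hR']
          have h3k := congrFun h3 k
          rw [hsplit rR.2 k] at h3k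
          rw [hXeq]
          revert h3k
          cases μ k <;> cases V₃ k <;> cases rR.2 j k <;>
            cases bigXor S rR.2 k <;> simp
        · have hjS : j ∈ S := Finset.mem_erase.mpr ⟨hj0, Finset.mem_compl.mpr hj⟩
          rw [hFRS R' j hjS]
    refine Prod.ext ?_ hRpart
    funext j
    by_cases hj : j ∈ Cor
    · have := h1 j hj
      simp only [hF, dif_pos hj]
      exact (congrArg Prod.fst this).symm
    · simp only [hF, dif_neg hj]
      funext k
      have h2k := congrFun (h2 j hj) k
      rw [hRpart]
      revert h2k
      cases rR.1 j k <;> cases h j (rR.2 j) k <;> cases t ⟨j, hj⟩ k <;> simp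
  · -- right inverse
    intro R' _
    funext j
    exact hFRS R' j.1 j.2 ▸ congrArg R' (Subtype.ext rfl)
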